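/- arXiv:2412.20263 — 3 statements merged into one kernel-verified Lean document; each statement's English description precedes it below -/
import Mathlib

section
/- For every integer d ≥ 3, the Kesten–McKay density is a probability density: ∫_{-2}^{2} ρ_d(x) dx = 1. -/
open Real Set intervalIntegral

lemma sqrt_arcsin_deriv (a : ℝ) (ha : 2 < a) {x : ℝ} (hx : x ∈ Set.Ioo (-2:ℝ) 2) :
    HasDerivAt (fun y : ℝ => Real.arcsin (y/2) -
        (Real.sqrt (a^2-4)/a) * Real.arcsin (Real.sqrt (a^2-4) * y / (2 * Real.sqrt (a^2 - y^2))))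
      (Real.sqrt (4 - x^2) / (a^2 - x^2)) x := by
  have ha0 : 0 < a := by linarith
  have hx4 : 0 < 4 - x^2 := by nlinarith [hx.1, hx.2]
  have hax : 0 < a^2 - x^2 := by nlinarith [hx.1, hx.2]
  have hb2 : 0 < a^2 - 4 := by nlinarith
  set b := Real.sqrt (a^2-4) with hbdef
  have hb : 0 < b := Real.sqrt_pos.2 hb2
  have hbsq : b^2 = a^2 - 4 := Real.sq_sqrt hb2.le
  set s := fun y : ℝ => Real.sqrt (a^2 - y^2) with hsdef
  have hsx : 0 < s x := Real.sqrt_pos.2 hax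
  have hssq : s x ^ 2 = a^2 - x^2 := Real.sq_sqrt hax.le
  have hq4 : 0 < Real.sqrt (4 - x^2) := Real.sqrt_pos.2 hx4
  have hq4sq : Real.sqrt (4 - x^2) ^ 2 = 4 - x^2 := Real.sq_sqrt hx4.le
  -- derivative of arcsin (y/2)
  have h1 : HasDerivAt (fun y : ℝ => Real.arcsin (y/2)) (1 / Real.sqrt (4 - x^2)) x := by
    have hd : HasDerivAt (fun y : ℝ => y/2) (1/2) x := (hasDerivAt_id x).div_const 2
    have hne1 : x/2 ≠ -1 := by intro h; nlinarith [hx.1]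
    have hne2 : x/2 ≠ 1 := by intro h; nlinarith [hx.2]
    have := (Real.hasDerivAt_arcsin hne1 hne2).comp x hd
    refine this.congr_deriv (Eq.symm ?_)
    have h24 : (1 : ℝ) - (x/2)^2 = (4 - x^2)/4 := by ring
    rw [h24, Real.sqrt_div hx4.le, show Real.sqrt 4 = 2 by
      rw [show (4:ℝ) = 2^2 by norm_num, Real.sqrt_sq (by norm_num : (0:ℝ) ≤ 2)]]
    field_simp
  -- derivative of s
  have hs : HasDerivAt s (-x / s x) x := by
    have hin : HasDerivAt (fun y : ℝ => a^2 - y^2) (-(2*x)) x := by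
      simpa using (hasDerivAt_pow 2 x).const_sub (a^2)
    have := (Real.hasDerivAt_sqrt hax.ne').comp x hin
    refine this.congr_deriv (Eq.symm ?_)
    field_simp
    ring
  -- derivative of g
  set g := fun y : ℝ => b * y / (2 * s y) with hgdef
  have hg : HasDerivAt g (b * a^2 / (2 * s x ^ 3)) x := by
    have hnum : HasDerivAt (fun y : ℝ => b * y) b x := by
      simpa using (hasDerivAt_id x).const_mul b
    have hden : HasDerivAt (fun y : ℝ => 2 * s y) (2 * (-x / s x)) x := hs.const_mul 2
    have := hnum.div hden (by positivity)
    refine this.congr_deriv (Eq.symm ?_)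
    field_simp
    linear_combination (-1) * hssq
  -- g x in (-1,1)
  have hgsq : g x ^ 2 < 1 := by
    have : (b*x)^2 < (2 * s x)^2 := by
      have h1 : (b*x)^2 = (a^2-4) * x^2 := by rw [mul_pow, hbsq]
      have h2 : (2 * s x)^2 = 4 * (a^2 - x^2) := by rw [mul_pow, hssq]; ring
      rw [h1, h2]; nlinarith
    have h2s : (0:ℝ) < 2 * s x := by positivity
    calc g x ^ 2 = (b*x)^2 / (2 * s x)^2 := by rw [hgdef]; rw [div_pow]
      _ < 1 := by rw [div_lt_one (by positivity)]; exact this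
  have hgne1 : g x ≠ -1 := by intro h; rw [h] at hgsq; norm_num at hgsq
  have hgne2 : g x ≠ 1 := by intro h; rw [h] at hgsq; norm_num at hgsq
  -- sqrt(1 - g²)
  have hsq1g : Real.sqrt (1 - g x ^ 2) = a * Real.sqrt (4 - x^2) / (2 * s x) := by
    have heq : 1 - g x ^ 2 = (a * Real.sqrt (4 - x^2) / (2 * s x))^2 := by
      rw [hgdef]
      field_simp
      nlinarith [hssq, hbsq, hq4sq]
    rw [heq, Real.sqrt_sq (by positivity)]
  -- derivative of arcsin (g y)
  have h2 : HasDerivAt (fun y => Real.arcsin (g y))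
      (a * b / ((a^2 - x^2) * Real.sqrt (4 - x^2))) x := by
    have := (Real.hasDerivAt_arcsin hgne1 hgne2).comp x hg
    refine this.congr_deriv (Eq.symm ?_)
    rw [hsq1g]
    field_simp
    linear_combination hssq
  have := h1.sub (h2.const_mul (b/a))
  refine this.congr_deriv (Eq.symm ?_)
  field_simp
  linear_combination hq4sq + hbsq

lemma sqrt_integral (a : ℝ) (ha : 2 < a) :
    ∫ x in (-2:ℝ)..2, Real.sqrt (4 - x^2) / (a^2 - x^2)
      = Real.pi * (1 - Real.sqrt (a^2 - 4) / a) := by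
  have ha0 : 0 < a := by linarith
  have hb2 : 0 < a^2 - 4 := by nlinarith
  set b := Real.sqrt (a^2-4) with hbdef
  have hb : 0 < b := Real.sqrt_pos.2 hb2
  set F := fun y : ℝ => Real.arcsin (y/2) -
      (b/a) * Real.arcsin (b * y / (2 * Real.sqrt (a^2 - y^2))) with hFdef
  have hax : ∀ y ∈ Set.Icc (-2:ℝ) 2, 0 < a^2 - y^2 := by
    intro y hy; nlinarith [hy.1, hy.2]
  have hcont : ContinuousOn F (Set.Icc (-2:ℝ) 2) := by
    apply ContinuousOn.sub
    · exact Real.continuous_arcsin.comp_continuousOn (continuousOn_id.div_const 2)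
    · apply ContinuousOn.mul continuousOn_const
      apply Real.continuous_arcsin.comp_continuousOn
      apply ContinuousOn.div
      · exact (by fun_prop : Continuous fun y : ℝ => b * y).continuousOn
      · exact (by fun_prop : Continuous fun y : ℝ => 2 * Real.sqrt (a^2 - y^2)).continuousOn
      · intro y hy
        have := hax y hy
        have : 0 < Real.sqrt (a^2 - y^2) := Real.sqrt_pos.2 this
        positivity
  have hint : IntervalIntegrable (fun x => Real.sqrt (4 - x^2) / (a^2 - x^2))
      MeasureTheory.volume (-2) 2 := by
    apply ContinuousOn.intervalIntegrable
    rw [Set.uIcc_of_le (by norm_num : (-2:ℝ) ≤ 2)]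
    apply ContinuousOn.div
    · exact (by fun_prop : Continuous fun y : ℝ => Real.sqrt (4 - y^2)).continuousOn
    · exact (by fun_prop : Continuous fun y : ℝ => a^2 - y^2).continuousOn
    · intro y hy; exact (hax y hy).ne'
  have key := intervalIntegral.integral_eq_sub_of_hasDeriv_right_of_le
    (by norm_num : (-2:ℝ) ≤ 2) hcont
    (fun x hx => (sqrt_arcsin_deriv a ha hx).hasDerivWithinAt) hint
  rw [key]
  have hF2 : F 2 = Real.pi/2 - (b/a) * (Real.pi/2) := by
    rw [hFdef]
    simp only
    rw [show (2:ℝ)/2 = 1 by norm_num, Real.arcsin_one]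
    rw [show a^2 - (2:ℝ)^2 = a^2 - 4 by ring, ← hbdef]
    rw [show b * 2 / (2 * b) = 1 by rw [mul_comm 2 b]; exact div_self (by positivity), Real.arcsin_one]
  have hFm2 : F (-2) = -(Real.pi/2) - (b/a) * (-(Real.pi/2)) := by
    rw [hFdef]
    simp only
    rw [show (-2:ℝ)/2 = -1 by norm_num, Real.arcsin_neg_one]
    rw [show a^2 - (-2:ℝ)^2 = a^2 - 4 by ring, ← hbdef]
    rw [show b * (-2) / (2 * b) = -1 by rw [mul_comm 2 b]; rw [div_eq_iff (by positivity)]; ring, Real.arcsin_neg_one]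
  rw [hF2, hFm2]
  ring


/-- The Kesten–McKay density for a `d`-regular graph (normalized adjacency matrix). -/
noncomputable def kestenMcKay (d : ℕ) (x : ℝ) : ℝ :=
  if x ∈ Set.Icc (-2 : ℝ) 2 then
    (1 + 1 / ((d : ℝ) - 1) - x ^ 2 / (d : ℝ))⁻¹ * Real.sqrt (4 - x ^ 2) / (2 * Real.pi)
  else 0

/-- The Kesten–McKay density is a probability density: it integrates to `1` over `[-2,2]`. -/
theorem kestenMcKay_integral_eq_one (d : ℕ) (hd : 3 ≤ d) :
    ∫ x in (-2 : ℝ)..2, kestenMcKay d x = 1 := by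
  have hD : (3:ℝ) ≤ (d:ℝ) := by exact_mod_cast hd
  set D := (d:ℝ) with hDdef
  have hD1 : 0 < D - 1 := by linarith
  have hD0 : 0 < D := by linarith
  have hsq : 0 < Real.sqrt (D-1) := Real.sqrt_pos.2 hD1
  have hssq : Real.sqrt (D-1)^2 = D - 1 := Real.sq_sqrt hD1.le
  set a := D / Real.sqrt (D-1) with hadef
  have ha2 : a^2 = D^2/(D-1) := by rw [hadef, div_pow, hssq]
  have ha : 2 < a := by
    rw [hadef, lt_div_iff₀ hsq]
    have h4 : (2*Real.sqrt (D-1))^2 < D^2 := by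
      rw [mul_pow, hssq]; nlinarith
    exact lt_of_pow_lt_pow_left₀ 2 hD0.le h4
  have ha0 : 0 < a := by linarith
  have hb : Real.sqrt (a^2-4) = (D-2)/Real.sqrt (D-1) := by
    rw [ha2, show D^2/(D-1) - 4 = (D-2)^2/(D-1) by field_simp; ring,
      Real.sqrt_div (by positivity) , Real.sqrt_sq (by linarith)]
  have hba : Real.sqrt (a^2-4)/a = (D-2)/D := by
    rw [hb, hadef]; field_simp
  have hcongr : Set.EqOn (fun x => kestenMcKay d x)
      (fun x => (D/(2*Real.pi)) * (Real.sqrt (4-x^2)/(a^2-x^2))) (Set.uIcc (-2:ℝ) 2) := by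
    intro x hx
    rw [Set.uIcc_of_le (by norm_num : (-2:ℝ) ≤ 2)] at hx
    simp only [kestenMcKay, if_pos hx, ← hDdef]
    rw [show (1 + 1/(D-1) - x^2/D) = (a^2 - x^2)/D by
      rw [ha2]; field_simp; ring, inv_div]
    ring
  rw [intervalIntegral.integral_congr hcongr, intervalIntegral.integral_const_mul,
    sqrt_integral a ha, hba]
  have hpi := Real.pi_ne_zero
  field_simp
  ring
end

section
/- There exist constants C > 0 and δ > 0 such that for all z in the upper half-plane with |z - 2| < δ: |m_sc(z) + 1 - √(z-2)| ≤ C|z-2| and |1 - m_sc(z)² - 2√(z-2)| ≤ C|z-2|, where √(z-2) denotes the principal branch of the square root. -/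
open Complex

lemma half_pow_re_im {w : ℂ} (hw : 0 < w.im) :
    0 < (w ^ ((1:ℂ)/2)).re ∧ 0 < (w ^ ((1:ℂ)/2)).im := by
  have hw0 : w ≠ 0 := by
    intro h; rw [h] at hw; simp at hw
  have hsin : 0 < Real.sin (arg w) := by
    rw [Complex.sin_arg]
    exact div_pos hw (norm_pos_iff.mpr hw0)
  have harg_pos : 0 < arg w := by
    by_contra h
    push_neg at h
    exact absurd (Real.sin_nonpos_of_nonpos_of_neg_pi_le h (neg_pi_lt_arg w).le)
      (not_le.mpr hsin)
  have harg_lt : arg w < Real.pi := by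
    rcases lt_or_eq_of_le (arg_le_pi w) with h | h
    · exact h
    · rw [h] at hsin; simp at hsin
  rw [cpow_def_of_ne_zero hw0]
  have him : (Complex.log w * ((1:ℂ)/2)).im = arg w / 2 := by
    simp [Complex.mul_im, Complex.log_im]
    ring
  rw [Complex.exp_re, Complex.exp_im, him]
  constructor
  · apply mul_pos (Real.exp_pos _)
    apply Real.cos_pos_of_mem_Ioo
    exact Set.mem_Ioo.mpr ⟨by linarith [Real.pi_pos], by linarith⟩
  · apply mul_pos (Real.exp_pos _)
    exact Real.sin_pos_of_pos_of_lt_pi (by linarith) (by linarith [Real.pi_pos])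

lemma half_pow_re_pos {w : ℂ} (hw : 0 < w.re) : 0 < (w ^ ((1:ℂ)/2)).re := by
  have hw0 : w ≠ 0 := by
    intro h; rw [h] at hw; simp at hw
  have harg : |arg w| < Real.pi / 2 := Complex.abs_arg_lt_pi_div_two_iff.mpr (Or.inl hw)
  rw [abs_lt] at harg
  rw [cpow_def_of_ne_zero hw0]
  have him : (Complex.log w * ((1:ℂ)/2)).im = arg w / 2 := by
    simp [Complex.mul_im, Complex.log_im]
    ring
  rw [Complex.exp_re, him]
  apply mul_pos (Real.exp_pos _)
  apply Real.cos_pos_of_mem_Ioo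
  exact Set.mem_Ioo.mpr ⟨by linarith, by linarith⟩

set_option maxHeartbeats 1000000 in
/-- Near the spectral edge `2`, the Stieltjes transform of the semicircle distribution
(characterized by `m_sc² + z·m_sc + 1 = 0` with `Im m_sc > 0` on the upper half-plane)
satisfies `m_sc(z) = -1 + √(z-2) + O(|z-2|)` and `1 - m_sc(z)² = 2√(z-2) + O(|z-2|)`,
where `√(z-2)` is the principal branch of the square root. -/
theorem msc_edge_expansion :
    ∃ C > (0 : ℝ), ∃ δ > (0 : ℝ), ∀ z msc : ℂ, 0 < z.im → ‖z - 2‖ < δ →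
      msc ^ 2 + z * msc + 1 = 0 → 0 < msc.im →
      ‖msc + 1 - (z - 2) ^ ((1 : ℂ) / 2)‖ ≤ C * ‖z - 2‖ ∧
      ‖1 - msc ^ 2 - 2 * (z - 2) ^ ((1 : ℂ) / 2)‖ ≤ C * ‖z - 2‖ := by
  refine ⟨6, by norm_num, 1/8, by norm_num, ?_⟩
  intro z msc hz hδ heq him
  set w : ℂ := z - 2 with hw_def
  set t : ℂ := msc + 1 with ht_def
  set s : ℂ := w ^ ((1:ℂ)/2) with hs_def
  have hw_im : 0 < w.im := by simpa [hw_def] using hz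
  have hw0 : w ≠ 0 := by intro h; rw [h] at hw_im; simp at hw_im
  have hs2 : s ^ 2 = w := by
    have h2 : ((1:ℂ)/2) = ((2:ℕ):ℂ)⁻¹ := by norm_num
    rw [hs_def, h2]
    exact Complex.cpow_nat_inv_pow w (n := 2) (by norm_num)
  have ht2 : t ^ 2 = w * (1 - t) := by
    rw [ht_def, hw_def]; linear_combination heq
  have ht_im : 0 < t.im := by simpa [ht_def]
  obtain ⟨hs_re, hs_im⟩ := half_pow_re_im hw_im
  rw [← hs_def] at hs_re hs_im
  have habs_t2 : ‖t‖ ^ 2 ≤ ‖w‖ * (1 + ‖t‖) := by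
    calc ‖t‖ ^ 2 = ‖t ^ 2‖ := by rw [norm_pow]
    _ = ‖w‖ * ‖1 - t‖ := by rw [ht2, norm_mul]
    _ ≤ ‖w‖ * (1 + ‖t‖) := by
        apply mul_le_mul_of_nonneg_left _ (norm_nonneg w)
        calc ‖1 - t‖ ≤ ‖(1:ℂ)‖ + ‖t‖ := by
              simpa [sub_eq_add_neg] using norm_add_le (1:ℂ) (-t)
        _ = 1 + ‖t‖ := by simp
  have hw_small : ‖w‖ < 1/8 := hδ
  have ht_small : ‖t‖ ≤ 1/2 := by
    by_contra h
    push_neg at h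
    nlinarith [norm_nonneg t, norm_nonneg w]
  have ht_sq : ‖t‖ ^ 2 ≤ 2 * ‖w‖ := by
    nlinarith [norm_nonneg w]
  set u : ℂ := (1 - t) ^ ((1:ℂ)/2) with hu_def
  have ht_re : t.re ≤ 1/2 := by
    calc t.re ≤ ‖t‖ := Complex.re_le_norm t
    _ ≤ 1/2 := ht_small
  have h1t_re : 0 < (1 - t).re := by simp [Complex.sub_re]; linarith
  have hu_re : 0 < u.re := by rw [hu_def]; exact half_pow_re_pos h1t_re
  have hu2 : u ^ 2 = 1 - t := by
    have h2 : ((1:ℂ)/2) = ((2:ℕ):ℂ)⁻¹ := by norm_num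
    rw [hu_def, h2]
    exact Complex.cpow_nat_inv_pow (1 - t) (n := 2) (by norm_num)
  have hu2re : u.re ^ 2 - u.im ^ 2 = 1 - t.re := by
    have h := congrArg Complex.re hu2
    rw [pow_two, Complex.mul_re, Complex.sub_re] at h
    simp at h
    linear_combination h
  have hu2im : 2 * u.re * u.im = -t.im := by
    have h := congrArg Complex.im hu2
    rw [pow_two, Complex.mul_im, Complex.sub_im] at h
    simp at h
    linear_combination h
  have hu_re2 : 1/2 ≤ u.re ^ 2 := by nlinarith [sq_nonneg u.im]
  have hs_abs_sq : ‖s‖ ^ 2 = ‖w‖ := by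
    rw [← norm_pow, hs2]
  have hs_re_sq : s.re ^ 2 ≤ 1/8 := by
    have h : s.re ^ 2 ≤ ‖s‖ ^ 2 := by
      rw [← _root_.sq_abs s.re]
      exact pow_le_pow_left₀ (abs_nonneg _) (Complex.abs_re_le_norm s) 2
    linarith
  have hfactor : (t - s * u) * (t + s * u) = 0 := by
    have h : t ^ 2 - s ^ 2 * u ^ 2 = 0 := by rw [hs2, hu2, ht2]; ring
    linear_combination h
  have hcase : t = s * u := by
    rcases mul_eq_zero.mp hfactor with h | h
    · exact sub_eq_zero.mp h
    · exfalso
      have hts : t = -(s * u) := by linear_combination h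
      have h_im : t.im = -(s.re * u.im + s.im * u.re) := by
        rw [hts, Complex.neg_im, Complex.mul_im]
      have key : t.im * (2 * u.re - s.re) = -(2 * s.im * u.re ^ 2) := by
        linear_combination 2 * u.re * h_im - s.re * hu2im
      have h2 : s.re < 2 * u.re := by nlinarith
      nlinarith [mul_pos ht_im (sub_pos.mpr h2), mul_pos hs_im (mul_pos hu_re hu_re)]
  have hu1 : (u - 1) * (u + 1) = -t := by linear_combination hu2
  have hu1_abs : (1:ℝ) ≤ ‖u + 1‖ := by
    calc (1:ℝ) ≤ (u + 1).re := by simp [Complex.add_re]; linarith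
    _ ≤ ‖u + 1‖ := Complex.re_le_norm _
  have hts_eq : t - s = s * (u - 1) := by rw [hcase]; ring
  have hts_abs : ‖t - s‖ ≤ ‖s‖ * ‖t‖ := by
    rw [hts_eq, norm_mul]
    apply mul_le_mul_of_nonneg_left _ (norm_nonneg s)
    have h1 : ‖u - 1‖ * ‖u + 1‖ = ‖t‖ := by
      rw [← norm_mul, hu1, norm_neg]
    nlinarith [norm_nonneg (u - 1)]
  have hst_bound : ‖s‖ * ‖t‖ ≤ 2 * ‖w‖ := by
    nlinarith [norm_nonneg s, norm_nonneg t, norm_nonneg w,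
      mul_nonneg (norm_nonneg s) (norm_nonneg t)]
  have hbound1 : ‖t - s‖ ≤ 2 * ‖w‖ := le_trans hts_abs hst_bound
  have hwnn : 0 ≤ ‖w‖ := norm_nonneg w
  constructor
  · have h1 : msc + 1 - (z - 2) ^ ((1 : ℂ) / 2) = t - s := by rw [ht_def, hs_def, hw_def]
    rw [h1]
    linarith
  · have heq2 : 1 - msc ^ 2 - 2 * (z - 2) ^ ((1 : ℂ) / 2) = 2 * (t - s) - t ^ 2 := by
      rw [ht_def, hs_def, hw_def]; ring
    rw [heq2]
    have h3 : ‖2 * (t - s) - t ^ 2‖ ≤ 2 * ‖t - s‖ + ‖t‖ ^ 2 := by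
      calc ‖2 * (t - s) - t ^ 2‖
          ≤ ‖2 * (t - s)‖ + ‖t ^ 2‖ :=
            norm_sub_le _ _
      _ = 2 * ‖t - s‖ + ‖t‖ ^ 2 := by
            rw [norm_mul, norm_pow]; norm_num
    linarith
end

section
/- Let a, b, c ∈ ℂ with a ≠ 0, b ≠ 0, and |a·c| ≤ |b|²/4. Then the quadratic equation a x² + b x + c = 0 has two roots x₁, x₂ (with multiplicity) such that: every root x satisfies either |x| ≤ 2|c|/|b| or |x| ≥ |b|/(2|a|), and at least one root satisfies |x| ≤ 2|c|/|b|. -/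
lemma quad_small_root (a b c x : ℂ) (hb : b ≠ 0)
    (hroot : a * x ^ 2 + b * x + c = 0)
    (hx : ‖x‖ ≤ ‖b‖ / (2 * ‖a‖)) :
    ‖x‖ ≤ 2 * ‖c‖ / ‖b‖ := by
  have hb' : (0:ℝ) < ‖b‖ := by
    simpa [norm_pos_iff] using hb
  have ha0 : (0:ℝ) ≤ ‖a‖ := norm_nonneg a
  have hx0 : (0:ℝ) ≤ ‖x‖ := norm_nonneg x
  have heq : b * x = -(a * x ^ 2 + c) := by linear_combination hroot
  have h1 : ‖b‖ * ‖x‖ ≤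
      ‖a‖ * ‖x‖ ^ 2 + ‖c‖ := by
    calc ‖b‖ * ‖x‖ = ‖b * x‖ := (norm_mul _ _).symm
      _ = ‖a * x ^ 2 + c‖ := by rw [heq, norm_neg]
      _ ≤ ‖a * x ^ 2‖ + ‖c‖ := norm_add_le _ _
      _ = ‖a‖ * ‖x‖ ^ 2 + ‖c‖ := by
          rw [norm_mul, norm_pow]
  have h2 : ‖a‖ * ‖x‖ ≤ ‖b‖ / 2 := by
    rcases eq_or_lt_of_le ha0 with h0 | h0
    · simp [← h0]
      positivity
    · have := mul_le_mul_of_nonneg_left hx (le_of_lt h0)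
      calc ‖a‖ * ‖x‖
          ≤ ‖a‖ * (‖b‖ / (2 * ‖a‖)) := this
        _ = ‖b‖ / 2 := by field_simp
  have h3 : ‖b‖ * ‖x‖ ≤
      ‖b‖ / 2 * ‖x‖ + ‖c‖ := by
    have : ‖a‖ * ‖x‖ ^ 2 ≤ ‖b‖ / 2 * ‖x‖ := by
      calc ‖a‖ * ‖x‖ ^ 2 = (‖a‖ * ‖x‖) * ‖x‖ := by ring
        _ ≤ ‖b‖ / 2 * ‖x‖ := mul_le_mul_of_nonneg_right h2 hx0
    linarith
  rw [le_div_iff₀ hb']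
  nlinarith

/-- Quantitative root-separation for quadratics: if `a, b ≠ 0` and `|ac| ≤ |b|²/4`, then
`a x² + b x + c` has two roots `x₁, x₂` (with multiplicity) such that every root `x`
satisfies `|x| ≤ 2|c|/|b|` or `|x| ≥ |b|/(2|a|)`, and at least one root satisfies
`|x| ≤ 2|c|/|b|`. -/
theorem quadratic_root_separation (a b c : ℂ) (ha : a ≠ 0) (hb : b ≠ 0)
    (h : ‖a * c‖ ≤ ‖b‖ ^ 2 / 4) :
    ∃ x₁ x₂ : ℂ,
      (∀ x : ℂ, a * x ^ 2 + b * x + c = a * (x - x₁) * (x - x₂)) ∧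
      (∀ x : ℂ, a * x ^ 2 + b * x + c = 0 →
        ‖x‖ ≤ 2 * ‖c‖ / ‖b‖ ∨
          ‖b‖ / (2 * ‖a‖) ≤ ‖x‖) ∧
      ‖x₁‖ ≤ 2 * ‖c‖ / ‖b‖ := by
  obtain ⟨s, hs⟩ := IsAlgClosed.exists_pow_nat_eq (k := ℂ) (b ^ 2 - 4 * a * c) (n := 2) (by norm_num)
  set r₁ : ℂ := (-b + s) / (2 * a) with hr₁
  set r₂ : ℂ := (-b - s) / (2 * a) with hr₂
  have ha2 : (2 : ℂ) * a ≠ 0 := by simp [ha]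
  have hfac : ∀ x : ℂ, a * x ^ 2 + b * x + c = a * (x - r₁) * (x - r₂) := by
    intro x
    rw [hr₁, hr₂]
    field_simp
    ring_nf
    linear_combination hs
  -- for any factorization, product of roots: c = a * r₁ * r₂
  have hprod : ‖r₁‖ * ‖r₂‖ = ‖c‖ / ‖a‖ := by
    have h0 : c = a * (0 - r₁) * (0 - r₂) := by
      have := hfac 0; simpa using this
    have : ‖c‖ = ‖a‖ * (‖r₁‖ * ‖r₂‖) := by
      rw [h0]; simp [norm_mul, mul_assoc]
    rw [this]
    field_simp [norm_ne_zero_iff.mpr ha]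
  have ha' : (0:ℝ) < ‖a‖ := by simpa [norm_pos_iff] using ha
  have hb' : (0:ℝ) < ‖b‖ := by simpa [norm_pos_iff] using hb
  have hac : ‖a‖ * ‖c‖ ≤ ‖b‖ ^ 2 / 4 := by
    rw [← norm_mul]; exact h
  -- min of the two roots is ≤ |b|/(2|a|)
  have hmin : min (‖r₁‖) (‖r₂‖) ≤ ‖b‖ / (2 * ‖a‖) := by
    by_contra hcon
    push_neg at hcon
    have h1 : ‖b‖ / (2 * ‖a‖) < ‖r₁‖ := lt_of_lt_of_le hcon (min_le_left _ _)
    have h2 : ‖b‖ / (2 * ‖a‖) < ‖r₂‖ := lt_of_lt_of_le hcon (min_le_right _ _)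
    have hpos : (0:ℝ) < ‖b‖ / (2 * ‖a‖) := by positivity
    have : (‖b‖ / (2 * ‖a‖)) ^ 2 < ‖r₁‖ * ‖r₂‖ := by
      calc (‖b‖ / (2 * ‖a‖)) ^ 2
          = (‖b‖ / (2 * ‖a‖)) * (‖b‖ / (2 * ‖a‖)) := sq _
        _ < ‖r₁‖ * ‖r₂‖ :=
            mul_lt_mul' (le_of_lt h1) h2 (le_of_lt hpos) (lt_trans hpos h1)
    rw [hprod] at this
    rw [div_pow, div_lt_div_iff₀ (by positivity) ha'] at this
    nlinarith
  -- choose x₁ as the root of smaller modulus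
  rcases le_total (‖r₁‖) (‖r₂‖) with hle | hle
  · refine ⟨r₁, r₂, hfac, ?_, ?_⟩
    · intro x hx
      rcases le_total (‖x‖) (‖b‖ / (2 * ‖a‖)) with hx' | hx'
      · exact Or.inl (quad_small_root a b c x hb hx hx')
      · exact Or.inr hx'
    · have hroot : a * r₁ ^ 2 + b * r₁ + c = 0 := by rw [hfac r₁]; ring
      exact quad_small_root a b c r₁ hb hroot (by simpa [min_eq_left hle] using hmin)
  · refine ⟨r₂, r₁, ?_, ?_, ?_⟩
    · intro x; rw [hfac x]; ring
    · intro x hx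
      rcases le_total (‖x‖) (‖b‖ / (2 * ‖a‖)) with hx' | hx'
      · exact Or.inl (quad_small_root a b c x hb hx hx')
      · exact Or.inr hx'
    · have hroot : a * r₂ ^ 2 + b * r₂ + c = 0 := by rw [hfac r₂]; ring
      exact quad_small_root a b c r₂ hb hroot (by simpa [min_eq_right hle] using hmin)
end
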